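/- Saddle-point property of the analytical solution: let σ̂ > 0 satisfy σ̂⁴ − σ0·σ̂³ − (μ−r)²/(2λ0) = 0 and set α̂ = (μ−r)/σ̂². Then (α̂, σ̂) is a saddle point of h: h(α, σ̂) ≤ h(α̂, σ̂) ≤ h(α̂, σ) for every α ∈ ℝ and every σ ∈ ℝ. -/
import Mathlib


/-- Saddle-point property of the analytical solution: if `σ̂ > 0` solves
`σ̂⁴ − σ0·σ̂³ − (μ−r)²/(2lam0) = 0` and `α̂ = (μ−r)/σ̂²`, then `(α̂, σ̂)` is a saddle
point of `h(α,σ) = α(μ−r) + r − (1/2)α²σ² + lam0(σ−σ0)²`. -/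
theorem saddle_point_log_utility (μ r lam0 σ0 : ℝ) (hμr : μ ≠ r)
    (hlam0 : 0 < lam0) (hσ0 : 0 ≤ σ0)
    (h : ℝ → ℝ → ℝ)
    (hh : ∀ α σ, h α σ = α * (μ - r) + r - (1 / 2) * α ^ 2 * σ ^ 2
        + lam0 * (σ - σ0) ^ 2)
    (σhat αhat : ℝ) (hσhat : 0 < σhat)
    (hquartic : σhat ^ 4 - σ0 * σhat ^ 3 - (μ - r) ^ 2 / (2 * lam0) = 0)
    (hαhat : αhat = (μ - r) / σhat ^ 2) :
    (∀ α : ℝ, h α σhat ≤ h αhat σhat) ∧ (∀ σ : ℝ, h αhat σhat ≤ h αhat σ) := by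
  have hσne : σhat ≠ 0 := ne_of_gt hσhat
  have hσ2 : σhat ^ 2 ≠ 0 := pow_ne_zero _ hσne
  have hkey : (μ - r) ^ 2 = 2 * lam0 * σhat ^ 3 * (σhat - σ0) := by
    have := hquartic
    field_simp at this
    nlinarith [this]
  have hαs : αhat * σhat ^ 2 = μ - r := by
    rw [hαhat]; field_simp
  have hα2 : αhat ^ 2 * σhat = 2 * lam0 * (σhat - σ0) := by
    have h1 : αhat ^ 2 * σhat ^ 4 = (μ - r) ^ 2 := by
      rw [← hαs]; ring
    have h2 : αhat ^ 2 * σhat ^ 4 = 2 * lam0 * σhat ^ 3 * (σhat - σ0) := by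
      rw [h1, hkey]
    have h3 : σhat ^ 3 ≠ 0 := pow_ne_zero _ hσne
    apply mul_right_cancel₀ h3
    nlinarith [h2]
  constructor
  · intro α
    rw [hh, hh, ← hαs]
    nlinarith [mul_nonneg (sq_nonneg σhat) (sq_nonneg (α - αhat))]
  · intro σ
    rw [hh, hh]
    have key : σhat * ((αhat * (μ - r) + r - (1 / 2) * αhat ^ 2 * σ ^ 2 + lam0 * (σ - σ0) ^ 2)
        - (αhat * (μ - r) + r - (1 / 2) * αhat ^ 2 * σhat ^ 2 + lam0 * (σhat - σ0) ^ 2))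
        = lam0 * σ0 * (σ - σhat) ^ 2 := by
      nlinarith [hα2, sq_nonneg (σ - σhat)]
    nlinarith [key, mul_nonneg (mul_nonneg hlam0.le hσ0) (sq_nonneg (σ - σhat)), hσhat]
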